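/- arXiv:1302.6949 — 4 statements merged into one kernel-verified Lean document; each statement's English description precedes it below -/
import Mathlib

section
/- Let K be a field (possibly finite), A = ⊕_{n∈ℤ} A_n a ℤ-graded associative K-algebra, and I a two-sided ideal of A. Then I is a graded ideal if and only if I is invariant under all base-changed gauge automorphisms, i.e. if and only if for every commutative K-algebra R and every z ∈ R^×, ρ_R(z) maps every element i ⊗ 1 with i ∈ I into the R-submodule of A ⊗_K R spanned by {j ⊗ 1 : j ∈ I}. -/
open TensorProduct

/-- `ρ` is the base-changed gauge automorphism of `A ⊗[K] R` attached to the unit `z ∈ Rˣ`: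
the (unique) map satisfying `ρ(aₙ ⊗ r) = aₙ ⊗ zⁿ r` for homogeneous `aₙ` of degree `n`. -/
def IsGaugeMap {K A R : Type} [Field K] [Ring A] [Algebra K A]
    (𝒜 : ℤ → Submodule K A) [CommRing R] [Algebra K R] (z : Rˣ)
    (ρ : A ⊗[K] R →ₗ[K] A ⊗[K] R) : Prop :=
  ∀ (n : ℤ) (a : A), a ∈ 𝒜 n → ∀ r : R,
    ρ (a ⊗ₜ[K] r) = a ⊗ₜ[K] (((z ^ n : Rˣ) : R) * r)

section Aux

variable {K A : Type} [Field K] [Ring A] [Algebra K A]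
  (𝒜 : ℤ → Submodule K A) [GradedRing 𝒜]

lemma gauge_apply {R : Type} [CommRing R] [Algebra K R] (z : Rˣ)
    [∀ (n : ℤ) (x : 𝒜 n), Decidable (x ≠ 0)]
    (ρ : A ⊗[K] R →ₗ[K] A ⊗[K] R) (hρ : IsGaugeMap 𝒜 z ρ) (a : A) (r : R) :
    ρ (a ⊗ₜ[K] r) = ∑ n ∈ (DirectSum.decompose 𝒜 a).support,
      ((DirectSum.decompose 𝒜 a n : A) ⊗ₜ[K] (((z ^ n : Rˣ) : R) * r)) := by
  conv_lhs => rw [← DirectSum.sum_support_decompose 𝒜 a]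
  rw [TensorProduct.sum_tmul, map_sum]
  exact Finset.sum_congr rfl fun n _ =>
    hρ n _ (DirectSum.decompose 𝒜 a n).2 r

/-- An explicit gauge map attached to any unit `z`. -/
noncomputable def gaugeρ {R : Type} [CommRing R] [Algebra K R] (z : Rˣ) :
    A ⊗[K] R →ₗ[K] A ⊗[K] R :=
  TensorProduct.lift <|
    ((LinearMap.llcomp K R (A ⊗[K] R) (A ⊗[K] R)).flip
        ((Algebra.TensorProduct.includeRight : R →ₐ[K] A ⊗[K] R).toLinearMap))
      ∘ₗ (LinearMap.mul K (A ⊗[K] R))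
      ∘ₗ (DirectSum.toModule K ℤ (A ⊗[K] R)
            (fun n => ((TensorProduct.mk K A R).flip (((z ^ n : Rˣ) : R))) ∘ₗ (𝒜 n).subtype))
      ∘ₗ (DirectSum.decomposeLinearEquiv 𝒜).toLinearMap

lemma gaugeρ_isGaugeMap {R : Type} [CommRing R] [Algebra K R] (z : Rˣ) :
    IsGaugeMap 𝒜 z (gaugeρ 𝒜 z) := by
  intro n a ha r
  have hdec : DirectSum.decompose 𝒜 a
      = DirectSum.lof K ℤ (fun n => 𝒜 n) n ⟨a, ha⟩ := by
    rw [DirectSum.lof_eq_of]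
    exact DirectSum.decompose_of_mem 𝒜 ha
  simp only [gaugeρ, TensorProduct.lift.tmul, LinearMap.comp_apply,
    LinearEquiv.coe_coe, DirectSum.decomposeLinearEquiv_apply, hdec,
    DirectSum.toModule_lof, LinearMap.flip_apply, TensorProduct.mk_apply,
    Submodule.coe_subtype, LinearMap.llcomp_apply, LinearMap.mul_apply',
    AlgHom.toLinearMap_apply, Algebra.TensorProduct.includeRight_apply,
    Algebra.TensorProduct.tmul_mul_tmul, mul_one]

end Aux

/-- A two-sided ideal `I` of a `ℤ`-graded algebra is graded iff it is invariant under all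
base-changed gauge automorphisms, i.e. each `ρ_R(z)` maps `I ⊗ 1` into the `R`-submodule
of `A ⊗[K] R` spanned by `{j ⊗ 1 : j ∈ I}` (equivalently, the `K`-span of
`{j ⊗ r : j ∈ I, r ∈ R}`). -/
theorem graded_ideal_iff_gauge_invariant
    (K A : Type) [Field K] [Ring A] [Algebra K A]
    (𝒜 : ℤ → Submodule K A) [GradedRing 𝒜] (I : TwoSidedIdeal A) :
    (∀ a ∈ I, ∀ n : ℤ, (DirectSum.decompose 𝒜 a n : A) ∈ I) ↔
    (∀ (R : Type) [CommRing R] [Algebra K R],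
      ∀ (z : Rˣ) (ρ : A ⊗[K] R →ₗ[K] A ⊗[K] R), IsGaugeMap 𝒜 z ρ →
        ∀ i ∈ I, ρ (i ⊗ₜ[K] (1 : R)) ∈
          Submodule.span K {x : A ⊗[K] R | ∃ j ∈ I, ∃ r : R, x = j ⊗ₜ[K] r}) := by
  classical
  constructor
  · intro h R _ _ z ρ hρ i hi
    rw [gauge_apply 𝒜 z ρ hρ i 1]
    exact Submodule.sum_mem _ fun n _ =>
      Submodule.subset_span ⟨_, h i hi n, _, rfl⟩
  · intro h i hi m
    set R := LaurentPolynomial K with hR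
    -- the unit `T 1`
    refine ?_
    let z : Rˣ := ⟨LaurentPolynomial.T 1, LaurentPolynomial.T (-1),
      by rw [← LaurentPolynomial.T_add]; norm_num,
      by rw [← LaurentPolynomial.T_add]; norm_num⟩
    have hz : ∀ n : ℤ, ((z ^ n : Rˣ) : R) = LaurentPolynomial.T n := by
      intro n
      induction n using Int.induction_on with
      | zero => simp [LaurentPolynomial.T_zero]
      | succ n ih =>
          rw [zpow_add_one, Units.val_mul, ih]
          show _ = LaurentPolynomial.T ((n : ℤ) + 1)
          rw [LaurentPolynomial.T_add]
      | pred n ih =>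
          rw [zpow_sub_one, Units.val_mul, ih]
          show LaurentPolynomial.T (-(n:ℤ)) * LaurentPolynomial.T (-1) = _
          rw [← LaurentPolynomial.T_add, show -(n:ℤ) + -1 = -(n:ℤ)-1 by ring]
    have hρ := gaugeρ_isGaugeMap 𝒜 (R := R) z
    have hmem := h R z (gaugeρ 𝒜 z) hρ i hi
    rw [gauge_apply 𝒜 z _ hρ i 1] at hmem
    -- coefficient extraction
    let c : R →ₗ[K] K :=
      { toFun := fun r => r.coeff m, map_add' := fun _ _ => rfl, map_smul' := fun _ _ => rfl }
    let φ : A ⊗[K] R →ₗ[K] A :=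
      (TensorProduct.rid K A).toLinearMap ∘ₗ LinearMap.lTensor A c
    have hφt : ∀ (a : A) (r : R), φ (a ⊗ₜ[K] r) = (r.coeff m) • a := by
      intro a r
      simp [φ, TensorProduct.rid_tmul]
      rfl
    have hsmul : ∀ (k : K) (a : A), a ∈ I → k • a ∈ I := by
      intro k a hA
      rw [Algebra.smul_def]
      exact I.mul_mem_left _ _ hA
    have hφ : φ (∑ n ∈ (DirectSum.decompose 𝒜 i).support,
        ((DirectSum.decompose 𝒜 i n : A) ⊗ₜ[K] (((z ^ n : Rˣ) : R) * 1))) ∈ I := by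
      refine Submodule.span_induction (p := fun x _ => φ x ∈ I) ?_ ?_ ?_ ?_ hmem
      · rintro x ⟨j, hj, r, rfl⟩
        rw [hφt]
        exact hsmul _ _ hj
      · simp only [map_zero]; exact I.zero_mem
      · intro x y _ _ hx hy
        rw [map_add]; exact I.add_mem hx hy
      · intro k x _ hx
        rw [map_smul]; exact hsmul _ _ hx
    have hT : ∀ n : ℤ, ((LaurentPolynomial.T n : R).coeff m) = if n = m then (1:K) else 0 := by
      intro n
      rw [LaurentPolynomial.T_apply]
    have key : φ (∑ n ∈ (DirectSum.decompose 𝒜 i).support,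
        ((DirectSum.decompose 𝒜 i n : A) ⊗ₜ[K] (((z ^ n : Rˣ) : R) * 1)))
        = (DirectSum.decompose 𝒜 i m : A) := by
      rw [map_sum]
      have : ∀ n ∈ (DirectSum.decompose 𝒜 i).support,
          φ ((DirectSum.decompose 𝒜 i n : A) ⊗ₜ[K] (((z ^ n : Rˣ) : R) * 1))
          = if n = m then (DirectSum.decompose 𝒜 i n : A) else 0 := by
        intro n _
        rw [hφt, hz, mul_one, hT]
        split <;> simp
      rw [Finset.sum_congr rfl this, Finset.sum_ite_eq' _ m]
      split
      · rfl
      · next hms =>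
          have := DFinsupp.notMem_support_iff.1 hms
          rw [this]; rfl
    rw [key] at hφ
    exact hφ
end

section
/- Let K be a field (possibly finite) and let A₁, A₂ be ℤ-graded associative K-algebras with base-changed gauge automorphisms ρ¹ and ρ². A K-algebra homomorphism f : A₁ → A₂ is a graded homomorphism (i.e. f((A₁)_n) ⊆ (A₂)_n for all n ∈ ℤ) if and only if it is a gauge-homomorphism, i.e. for every commutative K-algebra R and every z ∈ R^× the square commutes: (f ⊗ id_R) ∘ ρ¹_R(z) = ρ²_R(z) ∘ (f ⊗ id_R) as maps A₁ ⊗_K R → A₂ ⊗_K R. -/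
open TensorProduct

noncomputable def gaugeMap {K A : Type} (R : Type) [Field K] [Ring A] [Algebra K A]
    (𝒜 : ℤ → Submodule K A) [GradedRing 𝒜] [CommRing R] [Algebra K R] (z : Rˣ) :
    A ⊗[K] R →ₗ[K] A ⊗[K] R :=
  TensorProduct.lift
    ((DirectSum.toModule K ℤ (R →ₗ[K] A ⊗[K] R) fun n =>
      ((TensorProduct.mk K A R).compl₂ (LinearMap.mulLeft K ((z ^ n : Rˣ) : R))) ∘ₗ
        (𝒜 n).subtype) ∘ₗ (DirectSum.decomposeLinearEquiv 𝒜).toLinearMap)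

theorem gaugeMap_isGauge {K A : Type} (R : Type) [Field K] [Ring A] [Algebra K A]
    (𝒜 : ℤ → Submodule K A) [GradedRing 𝒜] [CommRing R] [Algebra K R] (z : Rˣ) :
    IsGaugeMap 𝒜 z (gaugeMap R 𝒜 z) := by
  intro n a ha r
  simp only [gaugeMap, TensorProduct.lift.tmul, LinearMap.coe_comp, Function.comp_apply,
    LinearEquiv.coe_coe, DirectSum.decomposeLinearEquiv_apply]
  rw [DirectSum.decompose_of_mem 𝒜 ha, ← DirectSum.lof_eq_of K, DirectSum.toModule_lof]
  rfl

-- the Laurent unit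
noncomputable def Tunit (K : Type) [Field K] : (LaurentPolynomial K)ˣ :=
  (LaurentPolynomial.isUnit_T (R := K) 1).unit

theorem Tunit_zpow (K : Type) [Field K] (n : ℤ) :
    ((Tunit K ^ n : (LaurentPolynomial K)ˣ) : LaurentPolynomial K) = LaurentPolynomial.T n := by
  have hval : ((Tunit K : (LaurentPolynomial K)ˣ) : LaurentPolynomial K)
      = LaurentPolynomial.T 1 := IsUnit.unit_spec _
  have hinv : (((Tunit K)⁻¹ : (LaurentPolynomial K)ˣ) : LaurentPolynomial K)
      = LaurentPolynomial.T (-1) := by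
    apply Units.inv_eq_of_mul_eq_one_right
    rw [hval, ← LaurentPolynomial.T_add]
    simp
  induction n using Int.induction_on with
  | zero => simp
  | succ k ih =>
    rw [zpow_add_one, Units.val_mul, ih, hval, ← LaurentPolynomial.T_add]
  | pred k ih =>
    rw [zpow_sub_one, Units.val_mul, ih, hinv, ← LaurentPolynomial.T_add]
    ring_nf

-- coefficient functional
noncomputable def coeffL (K : Type) [Field K] (m : ℤ) : LaurentPolynomial K →ₗ[K] K :=
  Finsupp.lapply m ∘ₗ (AddMonoidAlgebra.coeffLinearEquiv K).toLinearMap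

theorem coeffL_T (K : Type) [Field K] (m j : ℤ) :
    coeffL K m (LaurentPolynomial.T j) = if j = m then 1 else 0 := by
  show (Finsupp.single j (1:K)) m = _
  rw [Finsupp.single_apply]

noncomputable def psiL (K A : Type) [Field K] [Ring A] [Algebra K A] (m : ℤ) :
    A ⊗[K] LaurentPolynomial K →ₗ[K] A :=
  (TensorProduct.rid K A).toLinearMap ∘ₗ LinearMap.lTensor A (coeffL K m)

theorem psiL_tmul (K A : Type) [Field K] [Ring A] [Algebra K A] (m : ℤ)
    (b : A) (s : LaurentPolynomial K) :
    psiL K A m (b ⊗ₜ[K] s) = coeffL K m s • b := by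
  simp [psiL]

theorem psiL_gauge (K A : Type) [Field K] [Ring A] [Algebra K A]
    (𝒜 : ℤ → Submodule K A) [GradedRing 𝒜]
    (ρ : A ⊗[K] LaurentPolynomial K →ₗ[K] A ⊗[K] LaurentPolynomial K)
    (hρ : IsGaugeMap 𝒜 (Tunit K) ρ) (n : ℤ) (b : A) :
    psiL K A n (ρ (b ⊗ₜ[K] 1)) = (DirectSum.decompose 𝒜 b n : A) := by
  induction b using DirectSum.Decomposition.inductionOn 𝒜 with
  | zero =>
    rw [TensorProduct.zero_tmul, map_zero, map_zero, DirectSum.decompose_zero]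
    simp
  | @homogeneous m x =>
    obtain ⟨x, hx⟩ := x
    rw [hρ m x hx 1, mul_one, Tunit_zpow, psiL_tmul, coeffL_T]
    by_cases h : m = n
    · subst h
      rw [DirectSum.decompose_of_mem_same 𝒜 hx]
      simp
    · rw [DirectSum.decompose_of_mem_ne 𝒜 hx h]
      simp [h]
  | add x y hx hy =>
    rw [TensorProduct.add_tmul, map_add, map_add, hx, hy, DirectSum.decompose_add]
    simp


/-- A `K`-algebra homomorphism between `ℤ`-graded `K`-algebras is graded iff it is a
gauge-homomorphism: `(f ⊗ id_R) ∘ ρ¹_R(z) = ρ²_R(z) ∘ (f ⊗ id_R)` for every commutative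
`K`-algebra `R` and every `z ∈ Rˣ`. -/
theorem graded_hom_iff_gauge_hom
    (K A₁ A₂ : Type) [Field K] [Ring A₁] [Algebra K A₁] [Ring A₂] [Algebra K A₂]
    (𝒜₁ : ℤ → Submodule K A₁) [GradedRing 𝒜₁]
    (𝒜₂ : ℤ → Submodule K A₂) [GradedRing 𝒜₂]
    (f : A₁ →ₐ[K] A₂) :
    (∀ n : ℤ, ∀ a ∈ 𝒜₁ n, f a ∈ 𝒜₂ n) ↔
    (∀ (R : Type) [CommRing R] [Algebra K R], ∀ (z : Rˣ)
      (ρ₁ : A₁ ⊗[K] R →ₗ[K] A₁ ⊗[K] R) (ρ₂ : A₂ ⊗[K] R →ₗ[K] A₂ ⊗[K] R),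
      IsGaugeMap 𝒜₁ z ρ₁ → IsGaugeMap 𝒜₂ z ρ₂ →
      ∀ x : A₁ ⊗[K] R,
        LinearMap.rTensor R f.toLinearMap (ρ₁ x) =
          ρ₂ (LinearMap.rTensor R f.toLinearMap x)) := by
  constructor
  · intro hf R _ _ z ρ₁ ρ₂ h1 h2 x
    induction x using TensorProduct.induction_on with
    | zero => simp
    | tmul a r =>
      induction a using DirectSum.Decomposition.inductionOn 𝒜₁ with
      | zero => simp
      | @homogeneous i m =>
        obtain ⟨a, ha⟩ := m
        rw [h1 i a ha r, LinearMap.rTensor_tmul, LinearMap.rTensor_tmul]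
        simp only [AlgHom.toLinearMap_apply]
        rw [h2 i (f a) (hf i a ha) r]
      | add x y hx hy =>
        rw [TensorProduct.add_tmul, map_add, map_add, hx, hy, map_add, map_add]
    | add x y hx hy =>
      rw [map_add, map_add, hx, hy, map_add, map_add]
  · intro h n a ha
    have key := h (LaurentPolynomial K) (Tunit K)
      (gaugeMap _ 𝒜₁ (Tunit K)) (gaugeMap _ 𝒜₂ (Tunit K))
      (gaugeMap_isGauge _ 𝒜₁ _) (gaugeMap_isGauge _ 𝒜₂ _) (a ⊗ₜ[K] 1)
    rw [gaugeMap_isGauge _ 𝒜₁ (Tunit K) n a ha 1, mul_one, Tunit_zpow,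
      LinearMap.rTensor_tmul, LinearMap.rTensor_tmul] at key
    simp only [AlgHom.toLinearMap_apply] at key
    have := congrArg (psiL K A₂ n) key
    rw [psiL_tmul, coeffL_T, psiL_gauge K A₂ 𝒜₂ _ (gaugeMap_isGauge _ 𝒜₂ _) n (f a)] at this
    rw [if_pos rfl, one_smul] at this
    rw [this]
    exact SetLike.coe_mem _
end

section
/- Let K be an infinite field and let A₁, A₂ be ℤ-graded associative K-algebras with classical gauge actions τ¹ and τ². A K-algebra homomorphism f : A₁ → A₂ is a graded homomorphism (f((A₁)_n) ⊆ (A₂)_n for all n ∈ ℤ) if and only if f ∘ τ¹(z) = τ²(z) ∘ f for every z ∈ K^×. -/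
/-- `τ` is the classical gauge automorphism of the `ℤ`-graded `K`-algebra `A` attached to
`z ∈ Kˣ`: the (unique) `K`-linear map acting on `A_n` as multiplication by `zⁿ`. -/
def IsClassicalGaugeMap {K A : Type} [Field K] [Ring A] [Algebra K A]
    (𝒜 : ℤ → Submodule K A) (z : Kˣ) (τ : A →ₗ[K] A) : Prop :=
  ∀ (n : ℤ), ∀ x ∈ 𝒜 n, τ x = ((z ^ n : Kˣ) : K) • x


open DirectSum

variable {K A : Type} [Field K] [Ring A] [Algebra K A]

noncomputable def gaugeAux (𝒜 : ℤ → Submodule K A) [GradedRing 𝒜] (z : Kˣ) : A →ₗ[K] A :=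
  (DirectSum.toModule K ℤ A (fun n => ((z ^ n : Kˣ) : K) • (𝒜 n).subtype)) ∘ₗ
    (decomposeLinearEquiv 𝒜).toLinearMap

lemma gaugeAux_isGauge (𝒜 : ℤ → Submodule K A) [GradedRing 𝒜] (z : Kˣ) (n : ℤ) (x : A)
    (hx : x ∈ 𝒜 n) : gaugeAux 𝒜 z x = ((z ^ n : Kˣ) : K) • x := by
  rw [gaugeAux]
  simp only [LinearMap.coe_comp, LinearEquiv.coe_coe, Function.comp_apply,
    decomposeLinearEquiv_apply, decompose_of_mem 𝒜 hx]
  rw [show (DirectSum.of (fun i => 𝒜 i) n ⟨x, hx⟩ : ⨁ i, 𝒜 i) = lof K ℤ (fun i => 𝒜 i) n ⟨x, hx⟩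
    from rfl, DirectSum.toModule_lof]
  simp

lemma gaugeAux_decompose (𝒜 : ℤ → Submodule K A) [GradedRing 𝒜] (z : Kˣ) (x : A) (m : ℤ) :
    decompose 𝒜 (gaugeAux 𝒜 z x) m = ((z ^ m : Kˣ) : K) • decompose 𝒜 x m := by
  induction x using DirectSum.Decomposition.inductionOn 𝒜 with
  | zero => simp
  | @homogeneous i y =>
    obtain ⟨y, hy⟩ := y
    rw [gaugeAux_isGauge 𝒜 z i y hy, decompose_smul]
    by_cases him : i = m
    · subst him
      rw [DFinsupp.smul_apply]
    · have h1 : decompose 𝒜 y m = 0 := Subtype.ext (decompose_of_mem_ne 𝒜 hy him)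
      rw [DFinsupp.smul_apply, h1, smul_zero, smul_zero]
  | add x y hx hy =>
    rw [map_add, decompose_add, decompose_add, DFinsupp.add_apply, DFinsupp.add_apply, hx, hy, smul_add]

lemma exists_zpow_ne_one (K : Type) [Field K] [Infinite K] (k : ℤ) (hk : k ≠ 0) :
    ∃ z : Kˣ, z ^ k ≠ 1 := by
  have hj0 : 0 < k.natAbs := Int.natAbs_pos.mpr hk
  have hp : (Polynomial.X ^ k.natAbs - Polynomial.C 1 : Polynomial K) ≠ 0 :=
    Polynomial.X_pow_sub_C_ne_zero hj0 1
  have hfin : Set.Finite ({x : K | Polynomial.IsRoot (Polynomial.X ^ k.natAbs -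
      Polynomial.C 1 : Polynomial K) x} ∪ {0}) :=
    (Polynomial.finite_setOf_isRoot hp).union (Set.finite_singleton 0)
  obtain ⟨x, hx⟩ := hfin.infinite_compl.nonempty
  simp only [Set.mem_compl_iff, Set.mem_union, Set.mem_setOf_eq, Set.mem_singleton_iff,
    not_or, Polynomial.IsRoot, Polynomial.eval_sub, Polynomial.eval_pow, Polynomial.eval_X,
    Polynomial.eval_C, sub_eq_zero] at hx
  refine ⟨Units.mk0 x hx.2, fun h1 => hx.1 ?_⟩
  have hz : (Units.mk0 x hx.2) ^ (k.natAbs : ℤ) = 1 := by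
    rcases Int.natAbs_eq k with h | h
    · rwa [← h]
    · have hk' := congrArg (fun t : ℤ => (Units.mk0 x hx.2) ^ t) h
      simp only [zpow_neg] at hk'
      rw [hk', inv_eq_one] at h1
      exact h1
  have h2 := congrArg (Units.val) hz
  rw [zpow_natCast] at h2
  push_cast at h2
  simpa using h2

/-- Over an infinite field, a `K`-algebra homomorphism of `ℤ`-graded algebras is graded iff
it intertwines the classical gauge actions: `f ∘ τ¹(z) = τ²(z) ∘ f` for every `z ∈ Kˣ`. -/
theorem graded_hom_iff_classical_gauge_hom_of_infinite
    (K A₁ A₂ : Type) [Field K] [Infinite K]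
    [Ring A₁] [Algebra K A₁] [Ring A₂] [Algebra K A₂]
    (𝒜₁ : ℤ → Submodule K A₁) [GradedRing 𝒜₁]
    (𝒜₂ : ℤ → Submodule K A₂) [GradedRing 𝒜₂]
    (f : A₁ →ₐ[K] A₂) :
    (∀ n : ℤ, ∀ a ∈ 𝒜₁ n, f a ∈ 𝒜₂ n) ↔
    (∀ (z : Kˣ) (τ₁ : A₁ →ₗ[K] A₁) (τ₂ : A₂ →ₗ[K] A₂),
      IsClassicalGaugeMap 𝒜₁ z τ₁ → IsClassicalGaugeMap 𝒜₂ z τ₂ →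
      ∀ x : A₁, f (τ₁ x) = τ₂ (f x)) := by
  constructor
  · intro hg z τ₁ τ₂ h₁ h₂ x
    induction x using DirectSum.Decomposition.inductionOn 𝒜₁ with
    | zero => simp
    | @homogeneous i y =>
      obtain ⟨y, hy⟩ := y
      rw [h₁ i y hy, map_smul, h₂ i (f y) (hg i y hy)]
    | add x y hx hy => rw [map_add, map_add, map_add, map_add, hx, hy]
  · intro H n a ha
    classical
    have key : ∀ m : ℤ, m ≠ n → decompose 𝒜₂ (f a) m = 0 := by
      intro m hmn
      obtain ⟨z, hz⟩ := exists_zpow_ne_one K (m - n) (sub_ne_zero.mpr hmn)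
      have h := H z (gaugeAux 𝒜₁ z) (gaugeAux 𝒜₂ z)
        (fun i x hx => gaugeAux_isGauge 𝒜₁ z i x hx)
        (fun i x hx => gaugeAux_isGauge 𝒜₂ z i x hx) a
      rw [gaugeAux_isGauge 𝒜₁ z n a ha, map_smul] at h
      have h2 := congrArg (fun w => decompose 𝒜₂ w m) h
      simp only at h2
      rw [decompose_smul, DFinsupp.smul_apply, gaugeAux_decompose] at h2
      by_contra hc
      have h3 : (((z ^ n : Kˣ) : K) - ((z ^ m : Kˣ) : K)) • decompose 𝒜₂ (f a) m = 0 := by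
        exact (sub_smul ((z ^ n : Kˣ) : K) ((z ^ m : Kˣ) : K) (decompose 𝒜₂ (f a) m)).trans (by rw [h2, sub_self])
      rcases smul_eq_zero.mp h3 with h4 | h4
      · have hzz : z ^ m = z ^ n := Units.ext (sub_eq_zero.mp h4).symm
        apply hz
        rw [zpow_sub, hzz]; simp
      · exact hc h4
    rw [← DirectSum.sum_support_decompose 𝒜₂ (f a)]
    apply Submodule.sum_mem
    intro m hm
    by_cases hmn : m = n
    · subst hmn; exact (decompose 𝒜₂ (f a) m).2
    · rw [key m hmn]
      simp
end

section
/- Let K be a field and A = ⊕_{m∈ℤ} A_m, B = ⊕_{n∈ℤ} B_n ℤ-graded associative K-algebras. The fixed subalgebra of A ⊗_K B under the tensor product gauge action, namely the set of all x ∈ A ⊗_K B such that for every commutative K-algebra R and every z ∈ R^× one has γ_R(z)(x ⊗ 1) = x ⊗ 1, equals the K-subspace Σ_{n∈ℤ} A_n ⊗ B_n of A ⊗_K B, i.e. the span of all elements a ⊗ b with a ∈ A_n and b ∈ B_n for some n ∈ ℤ. -/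
set_option maxHeartbeats 1000000
set_option synthInstance.maxHeartbeats 1000000

open TensorProduct

/-- `γ` is the base change to `R`, at the unit `z ∈ Rˣ`, of the tensor product of the gauge
action of `A` at `z` with the gauge action of `B` at `z⁻¹`: the (unique) map with
`γ(a_m ⊗ b_n ⊗ r) = a_m ⊗ b_n ⊗ z^(m-n) r` for homogeneous `a_m, b_n`. -/
def IsTensorGaugeMap {K A B R : Type} [Field K] [Ring A] [Algebra K A] [Ring B] [Algebra K B]
    (𝒜 : ℤ → Submodule K A) (ℬ : ℤ → Submodule K B) [CommRing R] [Algebra K R] (z : Rˣ)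
    (γ : (A ⊗[K] B) ⊗[K] R →ₗ[K] (A ⊗[K] B) ⊗[K] R) : Prop :=
  ∀ (m n : ℤ) (a : A) (b : B), a ∈ 𝒜 m → b ∈ ℬ n → ∀ r : R,
    γ ((a ⊗ₜ[K] b) ⊗ₜ[K] r) = (a ⊗ₜ[K] b) ⊗ₜ[K] (((z ^ (m - n) : Rˣ) : R) * r)

namespace TensorGaugeAux

open DirectSum

/-- Abbreviation for the Laurent polynomial ring. -/
abbrev R0 (K : Type) [Field K] : Type := AddMonoidAlgebra K ℤ

theorem single_mul_single_cancel {K : Type} [Field K] (g : ℤ) :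
    (AddMonoidAlgebra.single g (1 : K)) * AddMonoidAlgebra.single (-g) 1 = 1 := by
  rw [AddMonoidAlgebra.single_mul_single, add_neg_cancel, one_mul, ← AddMonoidAlgebra.one_def]

/-- The group of units `single g 1` of the Laurent polynomial ring. -/
noncomputable def zU {K : Type} [Field K] : Multiplicative ℤ →* (R0 K)ˣ where
  toFun g :=
    ⟨AddMonoidAlgebra.single g.toAdd 1, AddMonoidAlgebra.single (-g.toAdd) 1,
      single_mul_single_cancel g.toAdd, by
        rw [AddMonoidAlgebra.single_mul_single, neg_add_cancel, one_mul,
          ← AddMonoidAlgebra.one_def]⟩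
  map_one' := Units.ext <| by
    show AddMonoidAlgebra.single (Multiplicative.toAdd 1) (1 : K) = 1
    rw [toAdd_one, ← AddMonoidAlgebra.one_def]
  map_mul' g h := Units.ext <| by
    show AddMonoidAlgebra.single (Multiplicative.toAdd (g * h)) (1 : K) = _
    rw [toAdd_mul]
    show _ = AddMonoidAlgebra.single g.toAdd (1 : K) * AddMonoidAlgebra.single h.toAdd 1
    rw [AddMonoidAlgebra.single_mul_single, one_mul]

theorem zU_zpow {K : Type} [Field K] (k : ℤ) :
    (((zU (Multiplicative.ofAdd 1)) ^ k : (R0 K)ˣ) : R0 K) =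
      AddMonoidAlgebra.single k 1 := by
  rw [← map_zpow]
  have h1 : (Multiplicative.ofAdd (1 : ℤ)) ^ k = Multiplicative.ofAdd k := by
    apply Multiplicative.toAdd.injective
    rw [toAdd_zpow]
    simp
  rw [h1]
  rfl

variable {K A B : Type} [Field K] [Ring A] [Algebra K A] [Ring B] [Algebra K B]
    (𝒜 : ℤ → Submodule K A) [GradedRing 𝒜] (ℬ : ℤ → Submodule K B) [GradedRing ℬ]

/-- The bihomogeneous components. -/
abbrev Mp (p : ℤ × ℤ) : Type := ↥(𝒜 p.1) ⊗[K] ↥(ℬ p.2)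

/-- The bigraded decomposition of `A ⊗ B`. -/
noncomputable def e0 : A ⊗[K] B ≃ₗ[K] ⨁ (p : ℤ × ℤ), Mp 𝒜 ℬ p :=
  (TensorProduct.congr (decomposeLinearEquiv 𝒜) (decomposeLinearEquiv ℬ)).trans
    (TensorProduct.directSum K K (fun m => ↥(𝒜 m)) (fun n => ↥(ℬ n)))

theorem e0_tmul {m n : ℤ} {a : A} {b : B} (ha : a ∈ 𝒜 m) (hb : b ∈ ℬ n) :
    e0 𝒜 ℬ (a ⊗ₜ[K] b) =
      DirectSum.lof K (ℤ × ℤ) (Mp 𝒜 ℬ) (m, n) (⟨a, ha⟩ ⊗ₜ[K] ⟨b, hb⟩) := by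
  have h1 : (decomposeLinearEquiv 𝒜) a = DirectSum.lof K ℤ (fun m => ↥(𝒜 m)) m ⟨a, ha⟩ := by
    rw [decomposeLinearEquiv_apply, DirectSum.decompose_of_mem 𝒜 ha, DirectSum.lof_eq_of]
  have h2 : (decomposeLinearEquiv ℬ) b = DirectSum.lof K ℤ (fun n => ↥(ℬ n)) n ⟨b, hb⟩ := by
    rw [decomposeLinearEquiv_apply, DirectSum.decompose_of_mem ℬ hb, DirectSum.lof_eq_of]
  rw [e0, LinearEquiv.trans_apply, TensorProduct.congr_tmul, h1, h2,
    TensorProduct.directSum_lof_tmul_lof]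

/-- Full decomposition of `(A ⊗ B) ⊗ R0`. -/
noncomputable def E : (A ⊗[K] B) ⊗[K] R0 K ≃ₗ[K] ⨁ (p : ℤ × ℤ), (Mp 𝒜 ℬ p ⊗[K] R0 K) :=
  (TensorProduct.congr (e0 𝒜 ℬ) (LinearEquiv.refl K (R0 K))).trans
    (TensorProduct.directSumLeft K K (Mp 𝒜 ℬ) (R0 K))

/-- The component maps of the gauge map at `z = single 1 1`. -/
noncomputable def cmap (p : ℤ × ℤ) : Mp 𝒜 ℬ p ⊗[K] R0 K →ₗ[K] Mp 𝒜 ℬ p ⊗[K] R0 K :=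
  LinearMap.lTensor _ (LinearMap.mulLeft K (AddMonoidAlgebra.single (p.1 - p.2) (1 : K)))

/-- The gauge map over the Laurent polynomial ring. -/
noncomputable def gammaMap : (A ⊗[K] B) ⊗[K] R0 K →ₗ[K] (A ⊗[K] B) ⊗[K] R0 K :=
  (E 𝒜 ℬ).symm.toLinearMap ∘ₗ
    (DFinsupp.mapRange.linearMap (cmap 𝒜 ℬ)) ∘ₗ (E 𝒜 ℬ).toLinearMap

theorem mapRange_lof (p : ℤ × ℤ) (v : Mp 𝒜 ℬ p ⊗[K] R0 K) :
    DFinsupp.mapRange.linearMap (cmap 𝒜 ℬ)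
        (DirectSum.lof K (ℤ × ℤ) (fun p => Mp 𝒜 ℬ p ⊗[K] R0 K) p v) =
      DirectSum.lof K (ℤ × ℤ) (fun p => Mp 𝒜 ℬ p ⊗[K] R0 K) p (cmap 𝒜 ℬ p v) :=
  DFinsupp.mapRange_single (hf := fun i => (cmap 𝒜 ℬ i).map_zero)

theorem mapRange_apply' (y : ⨁ (p : ℤ × ℤ), (Mp 𝒜 ℬ p ⊗[K] R0 K)) (p : ℤ × ℤ) :
    DFinsupp.mapRange.linearMap (cmap 𝒜 ℬ) y p = cmap 𝒜 ℬ p (y p) :=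
  DFinsupp.mapRange_apply _ (fun i => (cmap 𝒜 ℬ i).map_zero) y p

theorem E_tmul {m n : ℤ} {a : A} {b : B} (ha : a ∈ 𝒜 m) (hb : b ∈ ℬ n) (r : R0 K) :
    E 𝒜 ℬ ((a ⊗ₜ[K] b) ⊗ₜ[K] r) =
      DirectSum.lof K (ℤ × ℤ) (fun p => Mp 𝒜 ℬ p ⊗[K] R0 K) (m, n)
        ((⟨a, ha⟩ ⊗ₜ[K] ⟨b, hb⟩) ⊗ₜ[K] r) := by
  rw [E, LinearEquiv.trans_apply, TensorProduct.congr_tmul, LinearEquiv.refl_apply,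
    e0_tmul 𝒜 ℬ ha hb, TensorProduct.directSumLeft_tmul_lof]

theorem gamma_isGauge :
    IsTensorGaugeMap 𝒜 ℬ (zU (Multiplicative.ofAdd 1)) (gammaMap 𝒜 ℬ) := by
  intro m n a b ha hb r
  show (E 𝒜 ℬ).symm (DFinsupp.mapRange.linearMap (cmap 𝒜 ℬ)
      (E 𝒜 ℬ ((a ⊗ₜ[K] b) ⊗ₜ[K] r))) = _
  rw [E_tmul 𝒜 ℬ ha hb r, mapRange_lof, LinearEquiv.symm_apply_eq,
    E_tmul 𝒜 ℬ ha hb (((zU (Multiplicative.ofAdd 1) ^ (m - n) : (R0 K)ˣ)) * r),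
    zU_zpow]
  rfl

theorem directSumLeft_tmul_apply (w : ⨁ (p : ℤ × ℤ), Mp 𝒜 ℬ p) (r : R0 K) (p : ℤ × ℤ) :
    (TensorProduct.directSumLeft K K (Mp 𝒜 ℬ) (R0 K) (w ⊗ₜ[K] r)) p = (w p) ⊗ₜ[K] r := by
  induction w using DirectSum.induction_on with
  | zero =>
    rw [TensorProduct.zero_tmul, map_zero, DirectSum.zero_apply, DirectSum.zero_apply,
      TensorProduct.zero_tmul]
  | of i x =>
    rw [← DirectSum.lof_eq_of K, TensorProduct.directSumLeft_tmul_lof]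
    by_cases h : p = i
    · subst h
      rw [DirectSum.lof_eq_of, DirectSum.lof_eq_of, DirectSum.of_eq_same,
        DirectSum.of_eq_same]
    · rw [DirectSum.lof_eq_of, DirectSum.lof_eq_of, DirectSum.of_eq_of_ne _ _ _ h,
        DirectSum.of_eq_of_ne _ _ _ h, TensorProduct.zero_tmul]
  | add x y hx hy =>
    rw [TensorProduct.add_tmul, map_add, DirectSum.add_apply, hx, hy, DirectSum.add_apply,
      TensorProduct.add_tmul]

theorem offdiag_zero {x : A ⊗[K] B}
    (hx : gammaMap 𝒜 ℬ (x ⊗ₜ[K] (1 : R0 K)) = x ⊗ₜ[K] (1 : R0 K))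
    {p : ℤ × ℤ} (hp : p.1 ≠ p.2) : e0 𝒜 ℬ x p = 0 := by
  set w := e0 𝒜 ℬ x with hw
  have hE : ∀ q : ℤ × ℤ, E 𝒜 ℬ (x ⊗ₜ[K] (1 : R0 K)) q = (w q) ⊗ₜ[K] (1 : R0 K) := by
    intro q
    rw [E, LinearEquiv.trans_apply, TensorProduct.congr_tmul, LinearEquiv.refl_apply, ← hw]
    exact directSumLeft_tmul_apply 𝒜 ℬ w 1 q
  have hfix : DFinsupp.mapRange.linearMap (cmap 𝒜 ℬ) (E 𝒜 ℬ (x ⊗ₜ[K] (1 : R0 K))) =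
      E 𝒜 ℬ (x ⊗ₜ[K] (1 : R0 K)) := by
    have h : (E 𝒜 ℬ).symm (DFinsupp.mapRange.linearMap (cmap 𝒜 ℬ)
        (E 𝒜 ℬ (x ⊗ₜ[K] (1 : R0 K)))) = x ⊗ₜ[K] (1 : R0 K) := hx
    rw [LinearEquiv.symm_apply_eq] at h
    exact h
  have hcomp : cmap 𝒜 ℬ p ((w p) ⊗ₜ[K] (1 : R0 K)) = (w p) ⊗ₜ[K] (1 : R0 K) := by
    have h := congrFun (congrArg DFunLike.coe hfix) p
    rw [mapRange_apply' 𝒜 ℬ, hE p] at h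
    exact h
  have h2 : (w p) ⊗ₜ[K] (AddMonoidAlgebra.single (p.1 - p.2) (1 : K)) =
      (w p) ⊗ₜ[K] (1 : R0 K) := by
    rw [cmap, LinearMap.lTensor_tmul, LinearMap.mulLeft_apply, mul_one] at hcomp
    exact hcomp
  set d : ℤ := p.1 - p.2 with hd
  have hdne : d ≠ 0 := sub_ne_zero.mpr hp
  have h3 := congrArg ((TensorProduct.rid K (Mp 𝒜 ℬ p)).toLinearMap ∘ₗ
      LinearMap.lTensor (Mp 𝒜 ℬ p) (Finsupp.lapply (M := K) (R := K) d ∘ₗ (AddMonoidAlgebra.coeffLinearEquiv K).toLinearMap)) h2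
  rw [LinearMap.comp_apply, LinearMap.comp_apply, LinearMap.lTensor_tmul,
    LinearMap.lTensor_tmul] at h3
  have hl1 : (Finsupp.lapply (M := K) (R := K) d ∘ₗ (AddMonoidAlgebra.coeffLinearEquiv K).toLinearMap) (AddMonoidAlgebra.single d (1 : K)) = 1 := by
    simp [AddMonoidAlgebra.coeff_single_apply]
  have hl2 : (Finsupp.lapply (M := K) (R := K) d ∘ₗ (AddMonoidAlgebra.coeffLinearEquiv K).toLinearMap) (1 : R0 K) = 0 := by
    rw [AddMonoidAlgebra.one_def]
    show (AddMonoidAlgebra.single (0 : ℤ) (1 : K)).coeff d = 0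
    rw [AddMonoidAlgebra.coeff_single_apply, if_neg (Ne.symm hdne)]
  rw [hl1, hl2] at h3
  rw [LinearEquiv.coe_coe, TensorProduct.rid_tmul, TensorProduct.rid_tmul,
    one_smul, zero_smul] at h3
  exact h3

theorem diag_mem (n : ℤ) (v : Mp 𝒜 ℬ (n, n)) :
    (e0 𝒜 ℬ).symm (DirectSum.lof K (ℤ × ℤ) (Mp 𝒜 ℬ) (n, n) v) ∈
      Submodule.span K {x : A ⊗[K] B | ∃ n : ℤ, ∃ a ∈ 𝒜 n, ∃ b ∈ ℬ n, x = a ⊗ₜ[K] b} := by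
  induction v using TensorProduct.induction_on with
  | zero => rw [map_zero, map_zero]; exact Submodule.zero_mem _
  | tmul a b =>
    have h : (e0 𝒜 ℬ).symm (DirectSum.lof K (ℤ × ℤ) (Mp 𝒜 ℬ) (n, n) (a ⊗ₜ[K] b)) =
        (a : A) ⊗ₜ[K] (b : B) := by
      rw [LinearEquiv.symm_apply_eq, e0_tmul 𝒜 ℬ a.2 b.2]
    rw [h]
    exact Submodule.subset_span ⟨n, a, a.2, b, b.2, rfl⟩
  | add v₁ v₂ h₁ h₂ =>
    rw [map_add, map_add]
    exact Submodule.add_mem _ h₁ h₂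

theorem mem_span_of_fixed {x : A ⊗[K] B}
    (hx : gammaMap 𝒜 ℬ (x ⊗ₜ[K] (1 : R0 K)) = x ⊗ₜ[K] (1 : R0 K)) :
    x ∈ Submodule.span K {x : A ⊗[K] B | ∃ n : ℤ, ∃ a ∈ 𝒜 n, ∃ b ∈ ℬ n, x = a ⊗ₜ[K] b} := by
  classical
  set w := e0 𝒜 ℬ x with hw
  have hxw : x = (e0 𝒜 ℬ).symm w := (LinearEquiv.symm_apply_apply _ _).symm
  rw [hxw, ← DirectSum.sum_support_of w, map_sum]
  refine Submodule.sum_mem _ fun p hp => ?_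
  have hne : w p ≠ 0 := DFinsupp.mem_support_iff.mp hp
  have hdiag : p.1 = p.2 := by
    by_contra h
    exact hne (offdiag_zero 𝒜 ℬ hx h)
  obtain ⟨m, n⟩ := p
  obtain rfl : m = n := hdiag
  rw [← DirectSum.lof_eq_of K]
  exact diag_mem 𝒜 ℬ m _

end TensorGaugeAux

/-- The fixed subalgebra of `A ⊗[K] B` under the tensor product gauge action equals
`Σ_{n∈ℤ} A_n ⊗ B_n`, the `K`-span of all `a ⊗ b` with `a ∈ A_n`, `b ∈ B_n` for some `n`. -/
theorem fixed_algebra_of_tensor_gauge_action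
    (K A B : Type) [Field K] [Ring A] [Algebra K A] [Ring B] [Algebra K B]
    (𝒜 : ℤ → Submodule K A) [GradedRing 𝒜] (ℬ : ℤ → Submodule K B) [GradedRing ℬ] :
    {x : A ⊗[K] B | ∀ (R : Type) [CommRing R] [Algebra K R],
        ∀ (z : Rˣ) (γ : (A ⊗[K] B) ⊗[K] R →ₗ[K] (A ⊗[K] B) ⊗[K] R),
          IsTensorGaugeMap 𝒜 ℬ z γ → γ (x ⊗ₜ[K] (1 : R)) = x ⊗ₜ[K] (1 : R)} =
      ↑(Submodule.span K
        {x : A ⊗[K] B | ∃ n : ℤ, ∃ a ∈ 𝒜 n, ∃ b ∈ ℬ n, x = a ⊗ₜ[K] b}) := by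
  ext x
  constructor
  · intro h
    exact TensorGaugeAux.mem_span_of_fixed 𝒜 ℬ
      (h (TensorGaugeAux.R0 K) (TensorGaugeAux.zU (Multiplicative.ofAdd 1))
        (TensorGaugeAux.gammaMap 𝒜 ℬ) (TensorGaugeAux.gamma_isGauge 𝒜 ℬ))
  · intro hx R _ _ z γ hγ
    have hker : Submodule.span K
        {x : A ⊗[K] B | ∃ n : ℤ, ∃ a ∈ 𝒜 n, ∃ b ∈ ℬ n, x = a ⊗ₜ[K] b} ≤
        LinearMap.ker (γ ∘ₗ (TensorProduct.mk K (A ⊗[K] B) R).flip 1 -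
          (TensorProduct.mk K (A ⊗[K] B) R).flip 1) := by
      rw [Submodule.span_le]
      rintro _ ⟨n, a, ha, b, hb, rfl⟩
      simp only [SetLike.mem_coe, LinearMap.mem_ker, LinearMap.sub_apply, LinearMap.coe_comp,
        Function.comp_apply, LinearMap.flip_apply, TensorProduct.mk_apply]
      rw [hγ n n a b ha hb 1]
      simp
    have hm := hker hx
    rw [LinearMap.mem_ker] at hm
    have hm2 : γ (x ⊗ₜ[K] (1 : R)) - x ⊗ₜ[K] (1 : R) = 0 := hm
    exact sub_eq_zero.mp hm2
end
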